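/- Let a > 0 and n be a positive integer, let L_Φ = a·n·(2n−1)·2^{2n−2} be the Lipschitz constant of the flux Φ_{a,n} restricted to [0,2], and let W̃ = (w̃_{iℓ}) be an N×N matrix with nonnegative entries and positive diagonal. Suppose 0 < v^k_i < 1 for all 1 ≤ i ≤ N and that the time step size satisfies 0 < τ < 1 / (2·L_Φ·max_{1≤i≤N} Σ_{ℓ=1}^N w̃_{iℓ}). Then the explicit scheme v^{k+1}_i = v^k_i + τ·[ Σ_{ℓ : v^k_ℓ ≠ v^k_i} w̃_{iℓ}·(Φ_{a,n}(v^k_ℓ − v^k_i) − Φ_{a,n}(v^k_ℓ + v^k_i)) − Σ_{ℓ : v^k_ℓ = v^k_i} w̃_{iℓ}·Φ_{a,n}(2 v^k_i) ] satisfies 0 < v^{k+1}_i < 1 for all 1 ≤ i ≤ N. -/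
import Mathlib


open scoped Classical

/-- Flux `Φ_{a,n}(s) = a·n·(s−1)^(2n−1)` for `s ≥ 0`, extended by
`Φ_{a,n}(s) = a·n·(s+1)^(2n−1)` for `s < 0`. -/
noncomputable def flux (a : ℝ) (n : ℕ) (s : ℝ) : ℝ :=
  if 0 ≤ s then a * n * (s - 1) ^ (2 * n - 1) else a * n * (s + 1) ^ (2 * n - 1)

/-- Lipschitz constant `L_Φ = a·n·(2n−1)·2^(2n−2)` of the flux `Φ_{a,n}` on `[0,2]`. -/
noncomputable def LPhi (a : ℝ) (n : ℕ) : ℝ :=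
  a * n * ((2 * n - 1 : ℕ) : ℝ) * (2 : ℝ) ^ (2 * n - 2)


lemma pow_lip (m : ℕ) (u v : ℝ) (hu : |u| ≤ 1) (hv : |v| ≤ 1) (h : u ≤ v) :
    v ^ m - u ^ m ≤ (m : ℝ) * (v - u) := by
  rw [← geom_sum₂_mul v u m]
  have hb : (∑ i ∈ Finset.range m, v ^ i * u ^ (m - 1 - i)) ≤ (m : ℝ) := by
    calc (∑ i ∈ Finset.range m, v ^ i * u ^ (m - 1 - i))
        ≤ ∑ _i ∈ Finset.range m, (1 : ℝ) := by
          refine Finset.sum_le_sum fun i _ => ?_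
          calc v ^ i * u ^ (m - 1 - i) ≤ |v ^ i * u ^ (m - 1 - i)| := le_abs_self _
            _ = |v| ^ i * |u| ^ (m - 1 - i) := by rw [abs_mul, abs_pow, abs_pow]
            _ ≤ 1 ^ i * 1 ^ (m - 1 - i) := by
                exact mul_le_mul (pow_le_pow_left₀ (abs_nonneg _) hv i)
                  (pow_le_pow_left₀ (abs_nonneg _) hu _) (by positivity) (by norm_num)
            _ = 1 := by norm_num
      _ = (m : ℝ) := by simp
  exact mul_le_mul_of_nonneg_right hb (sub_nonneg.2 h)


lemma LPhi_pos (a : ℝ) (ha : 0 < a) (n : ℕ) (hn : 0 < n) : 0 < LPhi a n := by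
  have h1 : (0:ℝ) < (n:ℝ) := by exact_mod_cast hn
  have h2 : (0:ℝ) < ((2*n-1 : ℕ):ℝ) := by
    have : 1 ≤ 2*n-1 := by omega
    exact_mod_cast Nat.lt_of_lt_of_le Nat.zero_lt_one this
  unfold LPhi; positivity

lemma anm_le_LPhi (a : ℝ) (ha : 0 < a) (n : ℕ) (hn : 0 < n) :
    a * n * ((2*n-1 : ℕ):ℝ) ≤ LPhi a n := by
  have h1 : (0:ℝ) < (n:ℝ) := by exact_mod_cast hn
  have h2 : (0:ℝ) < ((2*n-1 : ℕ):ℝ) := by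
    have : 1 ≤ 2*n-1 := by omega
    exact_mod_cast Nat.lt_of_lt_of_le Nat.zero_lt_one this
  have h3 : (1:ℝ) ≤ (2:ℝ) ^ (2*n-2) := one_le_pow₀ (by norm_num)
  unfold LPhi
  nlinarith [mul_pos (mul_pos ha h1) h2]

lemma an_le_LPhi (a : ℝ) (ha : 0 < a) (n : ℕ) (hn : 0 < n) :
    a * n ≤ LPhi a n := by
  have h1 : (0:ℝ) < (n:ℝ) := by exact_mod_cast hn
  have h2 : (1:ℝ) ≤ ((2*n-1 : ℕ):ℝ) := by
    have : 1 ≤ 2*n-1 := by omega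
    exact_mod_cast this
  refine le_trans ?_ (anm_le_LPhi a ha n hn)
  nlinarith [mul_pos ha h1]

lemma term_bounds (a : ℝ) (ha : 0 < a) (n : ℕ) (hn : 0 < n) (x y : ℝ)
    (hx : x ∈ Set.Ioo (0:ℝ) 1) (hy : y ∈ Set.Ioo (0:ℝ) 1) :
    -(2 * LPhi a n * y) ≤ (if x = y then -flux a n (2*y)
        else flux a n (x-y) - flux a n (x+y)) ∧
    (if x = y then -flux a n (2*y) else flux a n (x-y) - flux a n (x+y))
      ≤ 2 * LPhi a n * (1-y) := by
  obtain ⟨hx0, hx1⟩ := hx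
  obtain ⟨hy0, hy1⟩ := hy
  set m := 2*n - 1 with hm
  have hmo : Odd m := ⟨n - 1, by omega⟩
  have hmc : (1:ℝ) ≤ (m:ℝ) := by exact_mod_cast (by omega : 1 ≤ m)
  have hn' : (0:ℝ) < (n:ℝ) := by exact_mod_cast hn
  have hLm := anm_le_LPhi a ha n hn
  have hLa := an_le_LPhi a ha n hn
  have hL := LPhi_pos a ha n hn
  have han : (0:ℝ) < a * n := mul_pos ha hn'
  by_cases hxy : x = y
  · simp only [if_pos hxy]
    have h2y : flux a n (2*y) = a*n*(2*y-1)^m := by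
      rw [flux, if_pos (by linarith)]
    rw [h2y]
    by_cases hyy : 2*y - 1 ≥ 0
    · have hp1 : (2*y-1)^m ≤ 2*y-1 := pow_le_of_le_one hyy (by linarith) (by omega)
      have hp0 : 0 ≤ (2*y-1)^m := pow_nonneg hyy m
      constructor <;> nlinarith
    · have hneg : (2*y-1)^m = -(1-2*y)^m := by
        have := hmo.neg_pow (1-2*y)
        rw [show -(1-2*y) = 2*y-1 by ring] at this
        rw [this]
      rw [hneg]
      have h12 : (0:ℝ) ≤ 1-2*y := by linarith
      have hp1 : (1-2*y)^m ≤ 1-2*y := pow_le_of_le_one h12 (by linarith) (by omega)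
      have hp0 : 0 ≤ (1-2*y)^m := pow_nonneg h12 m
      constructor <;> nlinarith
  · simp only [if_neg hxy]
    rcases lt_or_gt_of_ne hxy with hlt | hgt
    · -- x < y
      have hf1 : flux a n (x-y) = a*n*(x-y+1)^m := by
        rw [flux, if_neg (by linarith)]
      have hf2 : flux a n (x+y) = a*n*(x+y-1)^m := by
        rw [flux, if_pos (by linarith)]
      rw [hf1, hf2]
      set u := x+y-1
      set v := x-y+1
      have huv : u ≤ v := by simp only [u, v]; linarith
      have hu : |u| ≤ 1 := abs_le.2 ⟨by simp only [u]; linarith, by simp only [u]; linarith⟩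
      have hv : |v| ≤ 1 := abs_le.2 ⟨by simp only [v]; linarith, by simp only [v]; linarith⟩
      have hlip := pow_lip m u v hu hv huv
      have hmono : u^m ≤ v^m := (hmo.strictMono_pow (R := ℝ)).monotone huv
      have hvu : v - u = 2*(1-y) := by simp only [u, v]; ring
      rw [hvu] at hlip
      have hmono' : a*n*u^m ≤ a*n*v^m := mul_le_mul_of_nonneg_left hmono han.le
      have h1 : a*n*((m:ℝ)*(2*(1-y))) = (a*n*(m:ℝ))*(2*(1-y)) := by ring
      have h2 : a*n*((v^m) - (u^m)) ≤ a*n*((m:ℝ)*(2*(1-y))) :=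
        mul_le_mul_of_nonneg_left hlip han.le
      have h3 : (a*n*(m:ℝ))*(2*(1-y)) ≤ LPhi a n * (2*(1-y)) :=
        mul_le_mul_of_nonneg_right hLm (by linarith)
      have h4 : a*n*((v^m) - (u^m)) = a*n*v^m - a*n*u^m := by ring
      have h5 : (0:ℝ) ≤ 2 * LPhi a n * y :=
        mul_nonneg (by linarith) (by linarith)
      constructor
      · linarith
      · linarith
    · -- x > y
      have hf1 : flux a n (x-y) = a*n*(x-y-1)^m := by
        rw [flux, if_pos (by linarith)]
      have hf2 : flux a n (x+y) = a*n*(x+y-1)^m := by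
        rw [flux, if_pos (by linarith)]
      rw [hf1, hf2]
      set u := x-y-1
      set v := x+y-1
      have huv : u ≤ v := by simp only [u, v]; linarith
      have hu : |u| ≤ 1 := abs_le.2 ⟨by simp only [u]; linarith, by simp only [u]; linarith⟩
      have hv : |v| ≤ 1 := abs_le.2 ⟨by simp only [v]; linarith, by simp only [v]; linarith⟩
      have hlip := pow_lip m u v hu hv huv
      have hmono : u^m ≤ v^m := (hmo.strictMono_pow (R := ℝ)).monotone huv
      have hvu : v - u = 2*y := by simp only [u, v]; ring
      rw [hvu] at hlip
      have hmono' : a*n*u^m ≤ a*n*v^m := mul_le_mul_of_nonneg_left hmono han.le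
      have h1 : a*n*((m:ℝ)*(2*y)) = (a*n*(m:ℝ))*(2*y) := by ring
      have h2 : a*n*((v^m) - (u^m)) ≤ a*n*((m:ℝ)*(2*y)) :=
        mul_le_mul_of_nonneg_left hlip han.le
      have h3 : (a*n*(m:ℝ))*(2*y) ≤ LPhi a n * (2*y) :=
        mul_le_mul_of_nonneg_right hLm (by linarith)
      have h4 : a*n*((v^m) - (u^m)) = a*n*v^m - a*n*u^m := by ring
      have h5 : (0:ℝ) ≤ 2 * LPhi a n * (1-y) :=
        mul_nonneg (by linarith) (by linarith)
      constructor
      · linarith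
      · linarith

/-- Avoidance of range interval boundaries for the explicit scheme: if all
`vᵏᵢ ∈ (0,1)` and `0 < τ < 1/(2·L_Φ·maxᵢ Σₗ w̃ᵢₗ)`, then the explicit time step keeps all
values in `(0,1)`. -/
theorem stmt14 (a : ℝ) (ha : 0 < a) (n : ℕ) (hn : 0 < n) (N : ℕ) (hN : 1 ≤ N)
    (W : Matrix (Fin N) (Fin N) ℝ) (hW : ∀ i l, 0 ≤ W i l) (hdiag : ∀ i, 0 < W i i)
    (τ : ℝ) (vk vk1 : Fin N → ℝ)
    (hv : ∀ i, vk i ∈ Set.Ioo (0 : ℝ) 1)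
    (hτ0 : 0 < τ) (hτ : τ < 1 / (2 * LPhi a n * ⨆ i, ∑ l, W i l))
    (hscheme : ∀ i, vk1 i = vk i + τ *
      ((∑ l ∈ Finset.univ.filter (fun l => vk l ≠ vk i),
          W i l * (flux a n (vk l - vk i) - flux a n (vk l + vk i))) -
        ∑ l ∈ Finset.univ.filter (fun l => vk l = vk i),
          W i l * flux a n (2 * vk i))) :
    ∀ i, vk1 i ∈ Set.Ioo (0 : ℝ) 1 := by
  intro i
  obtain ⟨hy0, hy1⟩ := hv i
  set L := LPhi a n with hLdef
  set M := (⨆ i, ∑ l, W i l : ℝ) with hMdef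
  have hL : 0 < L := LPhi_pos a ha n hn
  have hsumle : ∀ j, ∑ l, W j l ≤ M := by
    intro j
    rw [hMdef]
    exact le_ciSup (Set.Finite.bddAbove (Set.finite_range fun j => ∑ l, W j l)) j
  have hsum0 : ∀ j, (0:ℝ) ≤ ∑ l, W j l := fun j => Finset.sum_nonneg fun l _ => hW j l
  have hM0 : 0 < M := by
    refine lt_of_lt_of_le (lt_of_lt_of_le (hdiag ⟨0, hN⟩) ?_) (hsumle ⟨0, hN⟩)
    exact Finset.single_le_sum (fun l _ => hW _ l) (Finset.mem_univ _)
  have h2LM : (0:ℝ) < 2 * L * M := by positivity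
  rw [lt_div_iff₀ h2LM] at hτ
  set y := vk i with hydef
  set F1 := Finset.univ.filter (fun l => vk l ≠ vk i) with hF1
  set F2 := Finset.univ.filter (fun l => vk l = vk i) with hF2
  set B1 := ∑ l ∈ F1, W i l * (flux a n (vk l - vk i) - flux a n (vk l + vk i)) with hB1
  set B2 := ∑ l ∈ F2, W i l * flux a n (2 * vk i) with hB2
  -- termwise bounds
  have hdiagterm := term_bounds a ha n hn (vk i) (vk i) (hv i) (hv i)
  simp only [if_pos rfl] at hdiagterm
  have hoff : ∀ l, vk l ≠ vk i →
      -(2 * L * y) ≤ flux a n (vk l - vk i) - flux a n (vk l + vk i) ∧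
      flux a n (vk l - vk i) - flux a n (vk l + vk i) ≤ 2 * L * (1 - y) := by
    intro l hl
    have := term_bounds a ha n hn (vk l) (vk i) (hv l) (hv i)
    simpa only [if_neg hl] using this
  have hB1low : ∑ l ∈ F1, W i l * (-(2 * L * y)) ≤ B1 := by
    refine Finset.sum_le_sum fun l hl => ?_
    have hml : vk l ≠ vk i := by
      simpa [hF1] using hl
    exact mul_le_mul_of_nonneg_left (hoff l hml).1 (hW i l)
  have hB1up : B1 ≤ ∑ l ∈ F1, W i l * (2 * L * (1 - y)) := by
    refine Finset.sum_le_sum fun l hl => ?_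
    have hml : vk l ≠ vk i := by
      simpa [hF1] using hl
    exact mul_le_mul_of_nonneg_left (hoff l hml).2 (hW i l)
  have hB2e : -B2 = ∑ l ∈ F2, W i l * (-flux a n (2 * vk i)) := by
    rw [hB2, ← Finset.sum_neg_distrib]
    exact Finset.sum_congr rfl fun l _ => (mul_neg _ _).symm
  have hB2low : ∑ l ∈ F2, W i l * (-(2 * L * y)) ≤ -B2 := by
    rw [hB2e]
    exact Finset.sum_le_sum fun l _ =>
      mul_le_mul_of_nonneg_left hdiagterm.1 (hW i l)
  have hB2up : -B2 ≤ ∑ l ∈ F2, W i l * (2 * L * (1 - y)) := by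
    rw [hB2e]
    exact Finset.sum_le_sum fun l _ =>
      mul_le_mul_of_nonneg_left hdiagterm.2 (hW i l)
  -- combine over all indices
  have hsplit : ∀ c : ℝ, ∑ l ∈ F1, W i l * c + ∑ l ∈ F2, W i l * c
      = (∑ l, W i l) * c := by
    intro c
    rw [hF1, hF2, add_comm,
      Finset.sum_filter_add_sum_filter_not Finset.univ (fun l => vk l = vk i)
        (fun l => W i l * c), Finset.sum_mul]
  have hBlow : (∑ l, W i l) * (-(2 * L * y)) ≤ B1 - B2 := by
    rw [← hsplit]; linarith
  have hBup : B1 - B2 ≤ (∑ l, W i l) * (2 * L * (1 - y)) := by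
    rw [← hsplit]; linarith
  rw [hscheme i]
  have s1 : τ * ((∑ l, W i l) * (-(2 * L * y))) ≤ τ * (B1 - B2) :=
    mul_le_mul_of_nonneg_left hBlow hτ0.le
  have s1' : τ * (B1 - B2) ≤ τ * ((∑ l, W i l) * (2 * L * (1 - y))) :=
    mul_le_mul_of_nonneg_left hBup hτ0.le
  have e1 : τ * ((∑ l, W i l) * (-(2 * L * y))) = -(2 * L * τ * y * (∑ l, W i l)) := by ring
  have e2 : τ * ((∑ l, W i l) * (2 * L * (1 - y))) = 2 * L * τ * (1 - y) * (∑ l, W i l) := by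
    ring
  have s3 : 2 * L * τ * y * (∑ l, W i l) ≤ 2 * L * τ * y * M :=
    mul_le_mul_of_nonneg_left (hsumle i)
      (mul_nonneg (mul_nonneg (by linarith) hτ0.le) hy0.le)
  have s3' : 2 * L * τ * (1 - y) * (∑ l, W i l) ≤ 2 * L * τ * (1 - y) * M :=
    mul_le_mul_of_nonneg_left (hsumle i)
      (mul_nonneg (mul_nonneg (by linarith) hτ0.le) (by linarith))
  have s4 : τ * (2 * L * M) * y < 1 * y := mul_lt_mul_of_pos_right hτ hy0
  have s4' : τ * (2 * L * M) * (1 - y) < 1 * (1 - y) :=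
    mul_lt_mul_of_pos_right hτ (by linarith)
  have e3 : τ * (2 * L * M) * y = 2 * L * τ * y * M := by ring
  have e3' : τ * (2 * L * M) * (1 - y) = 2 * L * τ * (1 - y) * M := by ring
  constructor
  · linarith
  · linarith
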